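/- Let X ⊂ ℝ^d be a measurable bounded convex (or star-shaped with inradius r_X and diameter h_X) set, let r, s ∈ [1,∞], ℓ ∈ ℕ. Then there exists C > 0 depending only on d, a lower bound of r_X/h_X, r, s, and ℓ, such that for all q ∈ P^ℓ(X): C |X|^{1/r - 1/s} ‖q‖_{L^s(X)} ≤ ‖q‖_{L^r(X)} ≤ C^{-1} |X|^{1/r - 1/s} ‖q‖_{L^s(X)}. -/

import Mathlib

open MeasureTheory Finset

/-- Membership in the local polynomial space `P^ℓ`. -/
def MemPolySpace (d ℓ : ℕ) (f : (Fin d → ℝ) → ℝ) : Prop :=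
  ∃ P : MvPolynomial (Fin d) ℝ, P.totalDegree ≤ ℓ ∧ ∀ x, f x = MvPolynomial.eval x P

/-- Membership in `P^ℓ` for an integer degree `ℓ`, with the convention `P^{-1} = {0}`. -/
def MemPolySpaceInt (d : ℕ) (ℓ : ℤ) (f : (Fin d → ℝ) → ℝ) : Prop :=
  if ℓ < 0 then (∀ x, f x = 0) else MemPolySpace d ℓ.toNat f

/-- `i`-th partial derivative. -/
noncomputable def pderiv' (d : ℕ) (f : (Fin d → ℝ) → ℝ) (i : Fin d) (x : Fin d → ℝ) : ℝ :=
  fderiv ℝ f x (Pi.single i 1)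

section LebEmbAuxSection

open Metric MvPolynomial Pointwise
open scoped ENNReal

namespace LebEmbAux


/-- A multivariate real polynomial vanishing on a ball around `0` is zero. -/
lemma eq_zero_of_vanish_ball {d : ℕ} (P : MvPolynomial (Fin d) ℝ) {ε : ℝ} (hε : 0 < ε)
    (h : ∀ x ∈ Metric.ball (0 : Fin d → ℝ) ε, eval x P = 0) : P = 0 := by
  apply MvPolynomial.funext (q := 0)
  intro v
  rw [map_zero]
  set Q : Polynomial ℝ :=
    MvPolynomial.aeval (fun i => Polynomial.C (v i) * Polynomial.X) P with hQdef
  have hQt : ∀ t : ℝ, Polynomial.eval t Q = eval (fun i => v i * t) P := by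
    intro t
    have h2 := AlgHom.congr_fun (MvPolynomial.comp_aeval (φ := Polynomial.aeval t)
      (f := fun i : Fin d => Polynomial.C (v i) * Polynomial.X) (R := ℝ)) P
    simp only [AlgHom.coe_comp, Function.comp_apply] at h2
    have h5 : (fun i : Fin d => Polynomial.aeval t (Polynomial.C (v i) * Polynomial.X)) =
        fun i => v i * t := by funext i; simp
    rw [h5] at h2
    have h4 : (Polynomial.aeval t) Q = Polynomial.eval t Q := by
      rw [Polynomial.aeval_def, Polynomial.eval, Polynomial.eval₂_eq_eval_map,
        Polynomial.eval₂_eq_eval_map]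
      simp
    rw [← h4, hQdef, h2, MvPolynomial.aeval_def, Algebra.algebraMap_self, eval₂_id]
  have hQ0 : Q = 0 := by
    apply Polynomial.eq_zero_of_infinite_isRoot
    apply Set.Infinite.mono (s := Set.Ioo (0:ℝ) (ε / (‖v‖ + 1)))
    · intro t ht
      obtain ⟨ht0, htε⟩ := ht
      have hv : (fun i => v i * t) ∈ Metric.ball (0 : Fin d → ℝ) ε := by
        rw [mem_ball_zero_iff]
        have : (fun i => v i * t) = t • v := by funext i; simp [mul_comm]
        rw [this, norm_smul]
        have h1 : ‖t‖ < ε / (‖v‖ + 1) := by rw [Real.norm_eq_abs, abs_of_pos ht0]; exact htε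
        have h2 : ‖v‖ < ‖v‖ + 1 := by linarith
        calc ‖t‖ * ‖v‖ ≤ ‖t‖ * (‖v‖ + 1) := by
              apply mul_le_mul_of_nonneg_left (by linarith) (norm_nonneg t)
          _ < ε / (‖v‖ + 1) * (‖v‖ + 1) := by
              apply mul_lt_mul_of_pos_right h1 (by positivity)
          _ = ε := by field_simp
      simp only [Set.mem_setOf_eq, Polynomial.IsRoot, hQt t]
      exact h _ hv
    · exact Set.Ioo_infinite (by positivity)
  have := hQt 1
  rw [hQ0] at this
  simp only [Polynomial.eval_zero] at this
  have hv1 : (fun i => v i * 1) = v := by funext i; simp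
  rw [hv1] at this
  exact this.symm


lemma eval_bind₁' {d : ℕ} (f : Fin d → MvPolynomial (Fin d) ℝ) (x : Fin d → ℝ)
    (P : MvPolynomial (Fin d) ℝ) :
    eval x (bind₁ f P) = eval (fun i => eval x (f i)) P := by
  exact MvPolynomial.eval₂Hom_bind₁ (RingHom.id ℝ) x f P

lemma totalDegree_affine_le {d : ℕ} (P : MvPolynomial (Fin d) ℝ) (z : Fin d → ℝ) (R : ℝ) :
    (bind₁ (fun i => C (z i) + C R * X i) P).totalDegree ≤ P.totalDegree := by
  set f : Fin d → MvPolynomial (Fin d) ℝ := fun i => C (z i) + C R * X i with hf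
  have hfdeg : ∀ i, (f i).totalDegree ≤ 1 := by
    intro i
    refine (totalDegree_add _ _).trans ?_
    simp only [totalDegree_C, max_le_iff]
    constructor
    · exact Nat.zero_le _
    · exact (totalDegree_mul _ _).trans (by simp [totalDegree_X, totalDegree_C])
  conv_lhs => rw [P.as_sum]
  rw [map_sum]
  refine (totalDegree_finset_sum _ _).trans ?_
  apply Finset.sup_le
  intro m hm
  rw [bind₁_monomial]
  refine (totalDegree_mul _ _).trans ?_
  simp only [totalDegree_C, zero_add]
  refine (totalDegree_finset_prod _ _).trans ?_
  calc ∑ i ∈ m.support, (f i ^ m i).totalDegree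
      ≤ ∑ i ∈ m.support, m i := by
        apply Finset.sum_le_sum
        intro i _
        exact (totalDegree_pow _ _).trans (by
          calc m i * (f i).totalDegree ≤ m i * 1 :=
                Nat.mul_le_mul_left _ (hfdeg i)
            _ = m i := Nat.mul_one _)
    _ = m.sum fun _ e => e := rfl
    _ ≤ P.totalDegree := le_totalDegree hm


lemma ball_univ_of_dzero (y : Fin 0 → ℝ) {r : ℝ} (hr : 0 < r) :
    Metric.ball y r = Set.univ := by
  ext x
  simp only [Metric.mem_ball, Set.mem_univ, iff_true]
  have : x = y := Subsingleton.elim _ _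
  rw [this, dist_self]
  exact hr

lemma vol_ball (d : ℕ) (x : Fin d → ℝ) {r : ℝ} (hr : 0 < r) :
    volume (Metric.ball x r) =
      ENNReal.ofReal (r ^ d) * volume (Metric.ball (0 : Fin d → ℝ) 1) := by
  rcases Nat.eq_zero_or_pos d with hd | hd
  · subst hd
    rw [ball_univ_of_dzero x hr, ball_univ_of_dzero 0 one_pos]
    simp
  · haveI : Nonempty (Fin d) := ⟨⟨0, hd⟩⟩
    have h := Measure.addHaar_ball (μ := volume) x hr.le
    rwa [Module.finrank_fintype_fun_eq_card, Fintype.card_fin] at h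

lemma cov (d : ℕ) (g : (Fin d → ℝ) → ℝ) (z : Fin d → ℝ) {R : ℝ} (hR : 0 < R) (ε : ℝ) :
    ∫ y in Metric.ball (0 : Fin d → ℝ) ε, g (z + R • y) =
      (R ^ d)⁻¹ * ∫ x in Metric.ball z (R * ε), g x := by
  have h1 : ∫ y in Metric.ball (0 : Fin d → ℝ) ε, (fun u => g (z + u)) (R • y) =
      (R ^ Module.finrank ℝ (Fin d → ℝ))⁻¹ •
        ∫ u in R • Metric.ball (0 : Fin d → ℝ) ε, g (z + u) :=
    Measure.setIntegral_comp_smul_of_pos volume (fun u => g (z + u)) _ hR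
  have h2 : R • Metric.ball (0 : Fin d → ℝ) ε = Metric.ball (0 : Fin d → ℝ) (R * ε) := by
    rw [smul_ball hR.ne' (0 : Fin d → ℝ) ε, smul_zero, Real.norm_eq_abs, abs_of_pos hR]
  have h3 : ∫ u in Metric.ball (0 : Fin d → ℝ) (R * ε), g (z + u) =
      ∫ x in Metric.ball z (R * ε), g x := by
    have hpre : (fun u : Fin d → ℝ => z + u) ⁻¹' Metric.ball z (R * ε) =
        Metric.ball (0 : Fin d → ℝ) (R * ε) := by
      ext u
      simp only [Set.mem_preimage, Metric.mem_ball]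
      rw [show dist (z + u) z = dist u 0 by
        rw [dist_eq_norm, dist_eq_norm, sub_zero, add_sub_cancel_left]]
    rw [← hpre]
    exact (measurePreserving_add_left volume z).setIntegral_preimage_emb
      (measurableEmbedding_addLeft z) _ _
  rw [h1, h2, h3, Module.finrank_fintype_fun_eq_card, Fintype.card_fin, smul_eq_mul]



variable {d ℓ : ℕ}

/-- index type for multi-indices of degree ≤ ℓ (componentwise ≤ ℓ suffices). -/
abbrev Idx (d ℓ : ℕ) := Fin d → Fin (ℓ + 1)

noncomputable def mkIdx (m : Idx d ℓ) : Fin d →₀ ℕ :=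
  Finsupp.equivFunOnFinite.symm fun i => (m i : ℕ)

lemma mkIdx_apply (m : Idx d ℓ) (i : Fin d) : mkIdx m i = (m i : ℕ) := rfl

lemma mkIdx_injective : Function.Injective (mkIdx (d := d) (ℓ := ℓ)) := by
  intro m m' h
  funext i
  have := congrArg (fun u => u i) h
  simp only [mkIdx_apply] at this
  exact Fin.ext this

noncomputable def Phi (d ℓ : ℕ) (w : Idx d ℓ → ℝ) (x : Fin d → ℝ) : ℝ :=
  ∑ m : Idx d ℓ, w m * ∏ i, x i ^ (m i : ℕ)

lemma Phi_continuous (w : Idx d ℓ → ℝ) : Continuous (Phi d ℓ w) := by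
  apply continuous_finset_sum
  intro m _
  exact continuous_const.mul (continuous_finset_prod _ fun i _ => (continuous_apply i).pow _)

lemma Phi_smul (a : ℝ) (w : Idx d ℓ → ℝ) (x : Fin d → ℝ) :
    Phi d ℓ (a • w) x = a * Phi d ℓ w x := by
  simp [Phi, Finset.mul_sum, mul_assoc]

lemma Phi_sub (w w' : Idx d ℓ → ℝ) (x : Fin d → ℝ) :
    Phi d ℓ (w - w') x = Phi d ℓ w x - Phi d ℓ w' x := by
  simp [Phi, sub_mul, Finset.sum_sub_distrib]

lemma Phi_bound (w : Idx d ℓ → ℝ) {x : Fin d → ℝ} (hx : ‖x‖ ≤ 1) :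
    |Phi d ℓ w x| ≤ (Fintype.card (Idx d ℓ) : ℝ) * ‖w‖ := by
  calc |Phi d ℓ w x| ≤ ∑ m : Idx d ℓ, |w m * ∏ i, x i ^ (m i : ℕ)| :=
        Finset.abs_sum_le_sum_abs _ _
    _ ≤ ∑ _m : Idx d ℓ, ‖w‖ := by
        apply Finset.sum_le_sum
        intro m _
        rw [abs_mul]
        have h1 : |w m| ≤ ‖w‖ := by
          have := norm_le_pi_norm w m
          simpa using this
        have h2 : |∏ i, x i ^ (m i : ℕ)| ≤ 1 := by
          rw [Finset.abs_prod]
          apply Finset.prod_le_one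
          · intro i _; positivity
          · intro i _
            rw [abs_pow]
            apply pow_le_one₀ (abs_nonneg _)
            have := norm_le_pi_norm x i
            simp only [Real.norm_eq_abs] at this ⊢
            exact le_trans this hx
        calc |w m| * |∏ i, x i ^ (m i : ℕ)| ≤ |w m| * 1 :=
              mul_le_mul_of_nonneg_left h2 (abs_nonneg _)
          _ = |w m| := mul_one _
          _ ≤ ‖w‖ := h1
    _ = (Fintype.card (Idx d ℓ) : ℝ) * ‖w‖ := by
        rw [Finset.sum_const, Finset.card_univ]; simp [nsmul_eq_mul]

/-- every polynomial of total degree ≤ ℓ is represented by `Phi` of its coefficients. -/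
lemma Phi_repr (P : MvPolynomial (Fin d) ℝ) (hP : P.totalDegree ≤ ℓ) (x : Fin d → ℝ) :
    eval x P = Phi d ℓ (fun m => coeff (mkIdx m) P) x := by
  rw [eval_eq', Phi]
  have himg : ∑ m : Idx d ℓ, coeff (mkIdx m) P * ∏ i, x i ^ (m i : ℕ) =
      ∑ u ∈ Finset.image (mkIdx (d := d) (ℓ := ℓ)) Finset.univ, coeff u P * ∏ i, x i ^ u i := by
    rw [Finset.sum_image (fun m _ m' _ h => mkIdx_injective h)]
    rfl
  rw [himg]
  apply Finset.sum_subset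
  · intro u hu
    have hle : ∀ i, u i ≤ ℓ := by
      intro i
      rcases Nat.eq_zero_or_pos (u i) with h0 | h0
      · omega
      · have hi : i ∈ u.support := Finsupp.mem_support_iff.mpr (by omega)
        have : u i ≤ u.sum fun _ e => e := by
          rw [Finsupp.sum]
          exact Finset.single_le_sum (fun j _ => Nat.zero_le _) hi
        exact le_trans this (le_trans (le_totalDegree hu) hP)
    refine Finset.mem_image.mpr ⟨fun i => ⟨u i, Nat.lt_succ_of_le (hle i)⟩, Finset.mem_univ _, ?_⟩
    apply Finsupp.ext
    intro i
    simp [mkIdx_apply]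
  · intro u _ hu
    rw [notMem_support_iff.mp hu, zero_mul]

/-- polynomial attached to a coefficient vector -/
noncomputable def Pw (d ℓ : ℕ) (w : Idx d ℓ → ℝ) : MvPolynomial (Fin d) ℝ :=
  ∑ m : Idx d ℓ, monomial (mkIdx m) (w m)

lemma eval_Pw (w : Idx d ℓ → ℝ) (x : Fin d → ℝ) : eval x (Pw d ℓ w) = Phi d ℓ w x := by
  rw [Pw, map_sum, Phi]
  apply Finset.sum_congr rfl
  intro m _
  rw [eval_monomial]
  congr 1
  rw [Finsupp.prod_fintype]
  · rfl
  · intro i; exact pow_zero _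

lemma coeff_Pw (w : Idx d ℓ → ℝ) (m : Idx d ℓ) : coeff (mkIdx m) (Pw d ℓ w) = w m := by
  rw [Pw]
  rw [MvPolynomial.coeff_sum]
  rw [Finset.sum_eq_single m]
  · simp [coeff_monomial]
  · intro m' _ hne
    rw [coeff_monomial, if_neg]
    intro hc
    exact hne (mkIdx_injective hc)
  · intro hm; exact absurd (Finset.mem_univ m) hm


lemma core (d ℓ : ℕ) {ε : ℝ} (hε : 0 < ε) (hε1 : ε ≤ 1) :
    ∃ c : ℝ, 0 < c ∧ ∀ P : MvPolynomial (Fin d) ℝ, P.totalDegree ≤ ℓ →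
      ∀ x ∈ Metric.closedBall (0 : Fin d → ℝ) 1,
        |eval x P| ≤ c * ∫ y in Metric.ball (0 : Fin d → ℝ) ε, |eval y P| := by
  classical
  set K : ℝ := (Fintype.card (Idx d ℓ) : ℝ) with hKdef
  have hK : 0 < K := by
    rw [hKdef]
    exact_mod_cast (Fintype.card_pos (α := Idx d ℓ))
  set I : (Idx d ℓ → ℝ) → ℝ :=
    fun w => ∫ y in Metric.ball (0 : Fin d → ℝ) ε, |Phi d ℓ w y| with hIdef
  have hInt : ∀ w, IntegrableOn (fun y => |Phi d ℓ w y|)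
      (Metric.ball (0 : Fin d → ℝ) ε) volume := fun w =>
    ((Phi_continuous w).abs.continuousOn.integrableOn_compact
      (isCompact_closedBall _ _)).mono_set Metric.ball_subset_closedBall
  have hInonneg : ∀ w, 0 ≤ I w := fun w => integral_nonneg fun y => abs_nonneg _
  set V : ℝ := (volume (Metric.ball (0 : Fin d → ℝ) ε)).toReal with hVdef
  have hV : 0 ≤ V := ENNReal.toReal_nonneg
  have hIdiff : ∀ w w' : Idx d ℓ → ℝ, I w ≤ I w' + V * (K * ‖w - w'‖) := by
    intro w w'
    have hptw : ∀ y ∈ Metric.ball (0 : Fin d → ℝ) ε,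
        |Phi d ℓ w y| ≤ |Phi d ℓ w' y| + K * ‖w - w'‖ := by
      intro y hy
      have hy1 : ‖y‖ ≤ 1 := le_trans (le_of_lt (mem_ball_zero_iff.mp hy)) hε1
      have hb := Phi_bound (w - w') hy1
      rw [Phi_sub] at hb
      calc |Phi d ℓ w y| = |Phi d ℓ w' y + (Phi d ℓ w y - Phi d ℓ w' y)| := by ring_nf
        _ ≤ |Phi d ℓ w' y| + |Phi d ℓ w y - Phi d ℓ w' y| := abs_add_le _ _
        _ ≤ _ := by linarith [abs_sub_abs_le_abs_sub (Phi d ℓ w y) (Phi d ℓ w' y), hb]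
    have hc : IntegrableOn (fun _ : Fin d → ℝ => K * ‖w - w'‖)
        (Metric.ball (0 : Fin d → ℝ) ε) volume :=
      integrableOn_const measure_ball_lt_top.ne
    calc I w ≤ ∫ y in Metric.ball (0 : Fin d → ℝ) ε, (|Phi d ℓ w' y| + K * ‖w - w'‖) := by
          apply setIntegral_mono_on (hInt w) ((hInt w').add hc) measurableSet_ball hptw
      _ = I w' + V * (K * ‖w - w'‖) := by
          rw [integral_add (hInt w') hc, setIntegral_const, smul_eq_mul]; rfl
  have hIlip : ∀ w w' : Idx d ℓ → ℝ, dist (I w) (I w') ≤ (V * K) * dist w w' := by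
    intro w w'
    rw [Real.dist_eq, abs_sub_le_iff, dist_eq_norm]
    constructor
    · have := hIdiff w w'; nlinarith [norm_nonneg (w - w')]
    · have := hIdiff w' w
      rw [show w' - w = -(w - w') by abel, norm_neg] at this
      nlinarith [norm_nonneg (w - w')]
  have hIcont : Continuous I :=
    (LipschitzWith.of_dist_le_mul (K := Real.toNNReal (V * K)) (fun w w' => by
      rw [Real.coe_toNNReal _ (by positivity)]; exact hIlip w w')).continuous
  have hsne : (Metric.sphere (0 : Idx d ℓ → ℝ) 1).Nonempty :=
    NormedSpace.sphere_nonempty.mpr zero_le_one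
  obtain ⟨u₀, hu₀s, hu₀min⟩ :=
    (isCompact_sphere (0 : Idx d ℓ → ℝ) 1).exists_isMinOn hsne hIcont.continuousOn
  have hu₀norm : ‖u₀‖ = 1 := by simpa using mem_sphere_zero_iff_norm.mp hu₀s
  have hε₀ : 0 < I u₀ := by
    rcases (hInonneg u₀).lt_or_eq with h | h
    · exact h
    exfalso
    have h0 : (fun y => |Phi d ℓ u₀ y|) =ᵐ[volume.restrict (Metric.ball (0 : Fin d → ℝ) ε)]
        (fun _ => (0:ℝ)) := by
      have := (integral_eq_zero_iff_of_nonneg (f := fun y => |Phi d ℓ u₀ y|)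
        (fun y => abs_nonneg _) (hInt u₀)).mp h.symm
      exact this
    have heq : Set.EqOn (fun y => |Phi d ℓ u₀ y|) (fun _ => (0:ℝ))
        (Metric.ball (0 : Fin d → ℝ) ε) :=
      Measure.eqOn_of_ae_eq h0 (Phi_continuous u₀).abs.continuousOn continuousOn_const
        (by rw [isOpen_ball.interior_eq]; exact subset_closure)
    have hPw0 : Pw d ℓ u₀ = 0 := by
      apply eq_zero_of_vanish_ball _ hε
      intro x hx
      rw [eval_Pw]
      exact abs_eq_zero.mp (heq hx)
    have hu0 : u₀ = 0 := funext fun m => by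
      have := coeff_Pw u₀ m
      rw [hPw0] at this
      simpa using this.symm
    rw [hu0, norm_zero] at hu₀norm
    exact zero_ne_one hu₀norm
  set ε₀ := I u₀
  refine ⟨K / ε₀, by positivity, ?_⟩
  intro P hP x hx
  set w : Idx d ℓ → ℝ := fun m => coeff (mkIdx m) P with hw
  have hrepr : ∀ y, eval y P = Phi d ℓ w y := Phi_repr P hP
  have hIeq : ∫ y in Metric.ball (0 : Fin d → ℝ) ε, |eval y P| = I w := by
    rw [hIdef]
    simp_rw [hrepr]
  rw [hIeq]
  rcases eq_or_ne w 0 with h0 | h0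
  · have hz : Phi d ℓ w x = 0 := by rw [h0]; simp [Phi]
    rw [hrepr x, hz, abs_zero]
    positivity
  · set u := ‖w‖⁻¹ • w with hu
    have hwn : ‖w‖ ≠ 0 := norm_ne_zero_iff.mpr h0
    have hun : ‖u‖ = 1 := by rw [hu, norm_smul, norm_inv, norm_norm, inv_mul_cancel₀ hwn]
    have hus : u ∈ Metric.sphere (0 : Idx d ℓ → ℝ) 1 := mem_sphere_zero_iff_norm.mpr hun
    have hIu : ε₀ ≤ I u := hu₀min hus
    have hIwu : I w = ‖w‖ * I u := by
      have hpt : ∀ y, |Phi d ℓ u y| = ‖w‖⁻¹ * |Phi d ℓ w y| := fun y => by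
        rw [hu, Phi_smul, abs_mul, abs_of_nonneg (inv_nonneg.mpr (norm_nonneg w))]
      have : I u = ‖w‖⁻¹ * I w := by
        rw [hIdef]
        simp_rw [hpt]
        rw [integral_const_mul]
      rw [this]
      field_simp
    have key : eval x P = ‖w‖ * Phi d ℓ u x := by
      conv_lhs => rw [hrepr x, show w = ‖w‖ • u from (smul_inv_smul₀ hwn w).symm, Phi_smul]
    rw [key]
    have hb := Phi_bound u (mem_closedBall_zero_iff.mp hx)
    rw [hun, mul_one] at hb
    calc |‖w‖ * Phi d ℓ u x| = ‖w‖ * |Phi d ℓ u x| := by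
          rw [abs_mul, abs_of_nonneg (norm_nonneg _)]
      _ ≤ ‖w‖ * K := mul_le_mul_of_nonneg_left hb (norm_nonneg _)
      _ = K / ε₀ * (‖w‖ * ε₀) := by field_simp
      _ ≤ K / ε₀ * (‖w‖ * I u) := by
          apply mul_le_mul_of_nonneg_left
            (mul_le_mul_of_nonneg_left hIu (norm_nonneg _)) (by positivity)
      _ = K / ε₀ * I w := by rw [hIwu]


/-- the core compactness lemma -/
lemma rpow_le_max (a : ℝ≥0∞) (ha : a ≠ ⊤) {e : ℝ} (he0 : 0 ≤ e) (he1 : e ≤ 1) :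
    a ^ e ≤ max 1 a := by
  rcases le_total a 1 with h | h
  · exact le_max_of_le_left (ENNReal.rpow_le_one h he0)
  · refine le_max_of_le_right ?_
    calc a ^ e ≤ a ^ (1 : ℝ) := ENNReal.rpow_le_rpow_of_exponent_le h he1
      _ = a := ENNReal.rpow_one a

lemma exp_facts {t : ℝ≥0∞} (ht : 1 ≤ t) : 0 ≤ 1 / t.toReal ∧ 1 / t.toReal ≤ 1 := by
  constructor
  · positivity
  · rcases eq_or_ne t ⊤ with h | h
    · simp [h]
    · have h1 : 1 ≤ t.toReal := by
        rw [← ENNReal.toReal_one]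
        exact ENNReal.toReal_mono h ht
      rw [div_le_one (by linarith)]
      linarith

theorem main_aux  (d ℓ : ℕ) (ϱ : ℝ) (hϱ : 0 < ϱ)
    (r s : ℝ≥0∞) (hr : 1 ≤ r) (hs : 1 ≤ s) :
    ∃ C : ℝ≥0∞, 0 < C ∧ C < ⊤ ∧
      ∀ X : Set (Fin d → ℝ), MeasurableSet X → Convex ℝ X →
        ∀ z : Fin d → ℝ, ∀ R : ℝ, 0 < R →
          Metric.ball z (ϱ * R) ⊆ X → X ⊆ Metric.ball z R →
          ∀ q : (Fin d → ℝ) → ℝ, MemPolySpace d ℓ q →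
            C * (volume X) ^ (1 / r.toReal - 1 / s.toReal) *
                eLpNorm q s (volume.restrict X) ≤ eLpNorm q r (volume.restrict X) ∧
              eLpNorm q r (volume.restrict X) ≤
                C⁻¹ * (volume X) ^ (1 / r.toReal - 1 / s.toReal) *
                  eLpNorm q s (volume.restrict X) := by
  classical
  set ε : ℝ := min ϱ 1 with hεdef
  have hε : 0 < ε := lt_min hϱ one_pos
  have hε1 : ε ≤ 1 := min_le_right _ _
  obtain ⟨c, hc, hcore⟩ := LebEmbAux.core d ℓ hε hε1
  set v₁ : ℝ≥0∞ := volume (Metric.ball (0 : Fin d → ℝ) 1) with hv₁def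
  have hv₁0 : v₁ ≠ 0 := (measure_ball_pos volume 0 one_pos).ne'
  have hv₁top : v₁ ≠ ⊤ := measure_ball_lt_top.ne
  set κ : ℝ≥0∞ := ENNReal.ofReal (ε ^ d) * v₁ with hκdef
  have hκ0 : κ ≠ 0 := mul_ne_zero (ENNReal.ofReal_pos.mpr (by positivity)).ne' hv₁0
  have hκtop : κ ≠ ⊤ := ENNReal.mul_ne_top ENNReal.ofReal_ne_top hv₁top
  set ct : ℝ≥0∞ := ENNReal.ofReal c with hctdef
  have hct0 : ct ≠ 0 := (ENNReal.ofReal_pos.mpr hc).ne'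
  have hcttop : ct ≠ ⊤ := ENNReal.ofReal_ne_top
  set A : ℝ≥0∞ := max 1 v₁ with hAdef
  set A₂ : ℝ≥0∞ := max 1 κ with hA₂def
  have hA0 : A ≠ 0 := (lt_of_lt_of_le zero_lt_one (le_max_left _ _)).ne'
  have hAtop : A ≠ ⊤ := by
    rw [hAdef]
    exact (max_lt ENNReal.one_lt_top hv₁top.lt_top).ne
  have hA₂0 : A₂ ≠ 0 := (lt_of_lt_of_le zero_lt_one (le_max_left _ _)).ne'
  have hA₂top : A₂ ≠ ⊤ := by
    rw [hA₂def]
    exact (max_lt ENNReal.one_lt_top hκtop.lt_top).ne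
  set D : ℝ≥0∞ := ct * A * A₂ with hDdef
  have hD0 : D ≠ 0 := mul_ne_zero (mul_ne_zero hct0 hA0) hA₂0
  have hDtop : D ≠ ⊤ := ENNReal.mul_ne_top (ENNReal.mul_ne_top hcttop hAtop) hA₂top
  refine ⟨D⁻¹, ENNReal.inv_pos.mpr hDtop, ENNReal.inv_lt_top.mpr (pos_iff_ne_zero.mpr hD0), ?_⟩
  intro X hX _hconv z R hR hb1 hb2 q hq
  obtain ⟨P, hPdeg, hqP⟩ := hq
  have hqfun : q = fun x => eval x P := funext hqP
  subst hqfun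
  set f : (Fin d → ℝ) → ℝ := fun x => eval x P with hfdef
  set B : Set (Fin d → ℝ) := Metric.ball z (ε * R) with hBdef
  have hBX : B ⊆ X :=
    (Metric.ball_subset_ball (mul_le_mul_of_nonneg_right (min_le_left ϱ 1) hR.le)).trans hb1
  have hXc : X ⊆ Metric.closedBall z R := hb2.trans Metric.ball_subset_closedBall
  set ρ : ℝ≥0∞ := ENNReal.ofReal (R ^ d) with hρdef
  have hρ0 : ρ ≠ 0 := (ENNReal.ofReal_pos.mpr (by positivity)).ne'
  have hρtop : ρ ≠ ⊤ := ENNReal.ofReal_ne_top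
  have hμX0 : volume X ≠ 0 := by
    have h1 : (0 : ℝ≥0∞) < volume B := measure_ball_pos volume z (by positivity)
    exact (h1.trans_le (measure_mono hBX)).ne'
  have hμXtop : volume X ≠ ⊤ := ((measure_mono hb2).trans_lt measure_ball_lt_top).ne
  have hvolB : volume B = κ * ρ := by
    rw [hBdef, vol_ball d z (by positivity : (0:ℝ) < ε * R), hκdef, hρdef, ← hv₁def, mul_pow,
      ENNReal.ofReal_mul (by positivity)]
    ring
  have hvolX_le : volume X ≤ ρ * v₁ := by
    calc volume X ≤ volume (Metric.ball z R) := measure_mono hb2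
      _ = ρ * v₁ := by rw [vol_ball d z hR, hρdef, hv₁def]
  have hcont : Continuous f := by
    rw [hfdef]; exact MvPolynomial.continuous_eval (p := P)
  set Ireal : ℝ := ∫ x in B, |f x| with hIdef
  have hIOn : IntegrableOn (fun x => |f x|) B volume :=
    (hcont.abs.continuousOn.integrableOn_compact (isCompact_closedBall z (ε * R))).mono_set
      Metric.ball_subset_closedBall
  set J : ℝ≥0∞ := eLpNorm f 1 (volume.restrict B) with hJdef
  have hJ : J = ENNReal.ofReal Ireal := by
    have h1 : ∫⁻ x, ‖f x‖ₑ ∂(volume.restrict B) =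
        ∫⁻ x, ENNReal.ofReal |f x| ∂(volume.restrict B) := by
      apply lintegral_congr
      intro x
      rw [← ofReal_norm, Real.norm_eq_abs]
    rw [hJdef, eLpNorm_one_eq_lintegral_enorm, h1,
      ← ofReal_integral_eq_lintegral_ofReal hIOn (ae_of_all _ fun x => abs_nonneg _)]
  -- pointwise bound on the big closed ball
  have hpt : ∀ x ∈ Metric.closedBall z R, |f x| ≤ c * ((R ^ d)⁻¹ * Ireal) := by
    intro x hx
    set P' := MvPolynomial.bind₁
      (fun i => MvPolynomial.C (z i) + MvPolynomial.C R * MvPolynomial.X i) P with hP'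
    have hdeg' : P'.totalDegree ≤ ℓ := (totalDegree_affine_le P z R).trans hPdeg
    have hev : ∀ y : Fin d → ℝ, eval y P' = f (z + R • y) := by
      intro y
      have harg : (fun i => eval y (MvPolynomial.C (z i) + MvPolynomial.C R *
          MvPolynomial.X i)) = (z + R • y) := by
        funext i
        simp [smul_eq_mul]
      rw [hP', eval_bind₁', harg, hfdef]
    have hy₀ : R⁻¹ • (x - z) ∈ Metric.closedBall (0 : Fin d → ℝ) 1 := by
      rw [Metric.mem_closedBall, dist_zero_right, norm_smul, norm_inv, Real.norm_eq_abs,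
        abs_of_pos hR]
      have hxz : ‖x - z‖ ≤ R := by
        rw [← dist_eq_norm]
        exact Metric.mem_closedBall.mp hx
      calc R⁻¹ * ‖x - z‖ ≤ R⁻¹ * R := by
            apply mul_le_mul_of_nonneg_left hxz (by positivity)
        _ = 1 := inv_mul_cancel₀ hR.ne'
    have hcx := hcore P' hdeg' _ hy₀
    simp only [hev] at hcx
    have hx_eq : z + R • (R⁻¹ • (x - z)) = x := by
      rw [smul_smul, mul_inv_cancel₀ hR.ne', one_smul, add_sub_cancel]
    rw [hx_eq] at hcx
    have hcov := cov d (fun u => |f u|) z hR ε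
    rw [hcov] at hcx
    rwa [mul_comm R ε, ← hBdef, ← hIdef] at hcx
  set Mreal : ℝ := c * ((R ^ d)⁻¹ * Ireal) with hMdef
  have hM : ENNReal.ofReal Mreal = ct * (ρ⁻¹ * J) := by
    rw [hMdef, hJ, ENNReal.ofReal_mul hc.le,
      ENNReal.ofReal_mul (by positivity : (0:ℝ) ≤ (R ^ d)⁻¹),
      ENNReal.ofReal_inv_of_pos (by positivity : (0:ℝ) < R ^ d), hρdef, hctdef]
  have htop_bound : eLpNorm f ⊤ (volume.restrict X) ≤ ENNReal.ofReal Mreal := by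
    rw [eLpNorm_exponent_top]
    apply eLpNormEssSup_le_of_ae_bound (C := Mreal)
    apply (ae_restrict_iff' hX).mpr (ae_of_all _ fun x hx => ?_)
    rw [Real.norm_eq_abs]
    exact hpt x (hXc hx)
  have hup : ∀ t : ℝ≥0∞, eLpNorm f t (volume.restrict X) ≤
      ct * (ρ⁻¹ * J) * (volume X) ^ (1 / t.toReal) := by
    intro t
    have h := eLpNorm_le_eLpNorm_mul_rpow_measure_univ (μ := volume.restrict X) (p := t) (q := ⊤) le_top
      hcont.aestronglyMeasurable
    rw [Measure.restrict_apply_univ] at h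
    simp only [ENNReal.toReal_top, div_zero, sub_zero] at h
    rw [← hM]
    exact h.trans (mul_le_mul_left htop_bound _)
  have hlow : ∀ t : ℝ≥0∞, 1 ≤ t →
      J ≤ eLpNorm f t (volume.restrict X) * (κ * ρ) ^ (1 - 1 / t.toReal) := by
    intro t ht
    have h := eLpNorm_le_eLpNorm_mul_rpow_measure_univ (μ := volume.restrict B) (p := 1) (q := t) ht
      hcont.aestronglyMeasurable
    rw [Measure.restrict_apply_univ, hvolB] at h
    simp only [ENNReal.toReal_one, div_one] at h
    rw [hJdef]
    refine h.trans ?_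
    exact mul_le_mul_left (eLpNorm_mono_measure _ (Measure.restrict_mono hBX le_rfl)) _
  obtain ⟨her0, her1⟩ := LebEmbAux.exp_facts hr
  obtain ⟨hes0, hes1⟩ := LebEmbAux.exp_facts hs
  set er : ℝ := 1 / r.toReal
  set es : ℝ := 1 / s.toReal
  have hXe : ∀ e : ℝ, 0 ≤ e → e ≤ 1 → (volume X) ^ e ≤ A * ρ ^ e := by
    intro e he0 he1
    calc (volume X) ^ e ≤ (ρ * v₁) ^ e := ENNReal.rpow_le_rpow hvolX_le he0
      _ = ρ ^ e * v₁ ^ e := ENNReal.mul_rpow_of_nonneg _ _ he0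
      _ ≤ ρ ^ e * A := mul_le_mul_right (rpow_le_max v₁ hv₁top he0 he1) _
      _ = A * ρ ^ e := mul_comm _ _
  have hBe : ∀ e : ℝ, 0 ≤ e → e ≤ 1 → (κ * ρ) ^ (1 - e) ≤ A₂ * ρ ^ (1 - e) := by
    intro e he0 he1
    calc (κ * ρ) ^ (1 - e) = κ ^ (1 - e) * ρ ^ (1 - e) :=
          ENNReal.mul_rpow_of_nonneg _ _ (by linarith)
      _ ≤ A₂ * ρ ^ (1 - e) :=
          mul_le_mul_left (rpow_le_max κ hκtop (by linarith) (by linarith)) _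
  have hρe : ∀ e : ℝ, ρ⁻¹ * ρ ^ e * ρ ^ (1 - e) = 1 := by
    intro e
    rw [mul_assoc, ← ENNReal.rpow_add _ _ hρ0 hρtop, show e + (1 - e) = 1 by ring,
      ENNReal.rpow_one, ENNReal.inv_mul_cancel hρ0 hρtop]
  have hXsplit : (volume X) ^ er = (volume X) ^ (er - es) * (volume X) ^ es := by
    rw [← ENNReal.rpow_add _ _ hμX0 hμXtop, sub_add_cancel]
  set NR : ℝ≥0∞ := eLpNorm f r (volume.restrict X) with hNRdef
  set NS : ℝ≥0∞ := eLpNorm f s (volume.restrict X) with hNSdef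
  constructor
  · -- lower embedding
    calc D⁻¹ * (volume X) ^ (er - es) * NS
        ≤ D⁻¹ * (volume X) ^ (er - es) * (ct * (ρ⁻¹ * J) * (volume X) ^ es) :=
          mul_le_mul_right (hup s) _
      _ = D⁻¹ * ct * ρ⁻¹ * ((volume X) ^ (er - es) * (volume X) ^ es) * J := by ring
      _ = D⁻¹ * ct * ρ⁻¹ * (volume X) ^ er * J := by rw [← hXsplit]
      _ ≤ D⁻¹ * ct * ρ⁻¹ * (volume X) ^ er * (NR * (κ * ρ) ^ (1 - er)) :=
          mul_le_mul_right (hlow r hr) _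
      _ ≤ D⁻¹ * ct * ρ⁻¹ * (A * ρ ^ er) * (NR * (A₂ * ρ ^ (1 - er))) := by
          gcongr
          · exact hXe er her0 her1
          · exact hBe er her0 her1
      _ = (D⁻¹ * (ct * A * A₂)) * (ρ⁻¹ * ρ ^ er * ρ ^ (1 - er)) * NR := by ring
      _ = NR := by
          rw [hρe er, ← hDdef, ENNReal.inv_mul_cancel hD0 hDtop]
          simp
  · -- upper embedding
    rw [inv_inv]
    calc NR ≤ ct * (ρ⁻¹ * J) * (volume X) ^ er := hup r
      _ ≤ ct * (ρ⁻¹ * (NS * (κ * ρ) ^ (1 - es))) * (volume X) ^ er :=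
          mul_le_mul_left (mul_le_mul_right (mul_le_mul_right (hlow s hs) _) _) _
      _ = ct * ρ⁻¹ * (κ * ρ) ^ (1 - es) * ((volume X) ^ (er - es) * (volume X) ^ es) * NS := by
          rw [← hXsplit]; ring
      _ ≤ ct * ρ⁻¹ * (A₂ * ρ ^ (1 - es)) * ((volume X) ^ (er - es) * (A * ρ ^ es)) * NS := by
          gcongr
          · exact hBe es hes0 hes1
          · exact hXe es hes0 hes1
      _ = (ct * A * A₂) * (ρ⁻¹ * ρ ^ es * ρ ^ (1 - es)) * (volume X) ^ (er - es) * NS := by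
          ring
      _ = D * (volume X) ^ (er - es) * NS := by
          rw [hρe es, ← hDdef, mul_one]

end LebEmbAux

end LebEmbAuxSection

open ENNReal in
/-- **Direct and reverse Lebesgue embeddings for polynomials.**
Let `r, s ∈ [1,∞]`, `ℓ ∈ ℕ`, and `ϱ > 0`.  There exists `C > 0` depending only on
`d`, `ϱ` (a lower bound of `r_X/h_X`), `r`, `s` and `ℓ` such that, for every bounded
convex measurable set `X ⊂ ℝ^d` that is shape-regular with parameter `ϱ`, and every
polynomial `q ∈ P^ℓ(X)`,
`C |X|^{1/r-1/s} ‖q‖_{L^s(X)} ≤ ‖q‖_{L^r(X)} ≤ C⁻¹ |X|^{1/r-1/s} ‖q‖_{L^s(X)}`. -/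
theorem lebesgue_embeddings_polynomials (d ℓ : ℕ) (ϱ : ℝ) (hϱ : 0 < ϱ)
    (r s : ℝ≥0∞) (hr : 1 ≤ r) (hs : 1 ≤ s) :
    ∃ C : ℝ≥0∞, 0 < C ∧ C < ⊤ ∧
      ∀ X : Set (Fin d → ℝ), MeasurableSet X → Convex ℝ X →
        ∀ z : Fin d → ℝ, ∀ R : ℝ, 0 < R →
          Metric.ball z (ϱ * R) ⊆ X → X ⊆ Metric.ball z R →
          ∀ q : (Fin d → ℝ) → ℝ, MemPolySpace d ℓ q →
            C * (volume X) ^ (1 / r.toReal - 1 / s.toReal) *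
                eLpNorm q s (volume.restrict X) ≤ eLpNorm q r (volume.restrict X) ∧
              eLpNorm q r (volume.restrict X) ≤
                C⁻¹ * (volume X) ^ (1 / r.toReal - 1 / s.toReal) *
                  eLpNorm q s (volume.restrict X) := by
  exact LebEmbAux.main_aux d ℓ ϱ hϱ r s hr hs
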